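/- Let C_F be an (F, M, d)_q Ferrers diagram rank-metric code for an m×n Ferrers diagram F. For 0 ≤ i ≤ d-1, let v_i be the number of dots of F remaining after deleting the top i rows and the rightmost d-1-i columns. Then M ≤ q^{min_i v_i}. -/

import Mathlib

open Finset

/-- If all columns of `A` outside `s` vanish, then `A.rank ≤ s.card`. -/
lemma rank_le_card_cols {F : Type*} [Field F] {m n : ℕ}
    (A : Matrix (Fin m) (Fin n) F) (s : Finset (Fin n))
    (h : ∀ c ∉ s, ∀ r, A r c = 0) : A.rank ≤ s.card := by
  classical
  have hsub : LinearMap.range A.mulVecLin ≤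
      Submodule.span F ((s.image fun c => A.transpose c : Finset (Fin m → F)) :
        Set (Fin m → F)) := by
    rintro y ⟨x, rfl⟩
    have hx : A.mulVecLin x = ∑ c ∈ s, x c • A.transpose c := by
      funext r
      have hz : ∀ c ∈ Finset.univ, c ∉ s → A r c * x c = 0 := by
        intro c _ hc; rw [h c hc r]; ring
      have := (Finset.sum_subset (Finset.subset_univ s) hz).symm
      simp only [Matrix.mulVecLin_apply, Matrix.mulVec, dotProduct]
      rw [this]
      simp [Matrix.transpose, mul_comm]
    rw [hx]
    exact Submodule.sum_mem _ fun c hc =>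
      Submodule.smul_mem _ _ (Submodule.subset_span (Finset.mem_image_of_mem _ hc))
  calc A.rank ≤ Module.finrank F
        (Submodule.span F ((s.image fun c => A.transpose c : Finset (Fin m → F)) :
          Set (Fin m → F))) := Submodule.finrank_mono hsub
    _ ≤ (s.image fun c => A.transpose c).card := finrank_span_finset_le_card _
    _ ≤ s.card := Finset.card_image_le

lemma matrix_rank_add_le {F : Type*} [Field F] {m n : ℕ}
    (A B : Matrix (Fin m) (Fin n) F) : (A + B).rank ≤ A.rank + B.rank := by
  rw [Matrix.rank, Matrix.rank, Matrix.rank, Matrix.mulVecLin_add]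
  have hr : LinearMap.range (A.mulVecLin + B.mulVecLin) ≤
      LinearMap.range A.mulVecLin ⊔ LinearMap.range B.mulVecLin := by
    rintro y ⟨x, rfl⟩
    exact Submodule.add_mem_sup ⟨x, rfl⟩ ⟨x, rfl⟩
  exact (Submodule.finrank_mono hr).trans
    (Submodule.finrank_add_le_finrank_add_finrank _ _)

/-- Etzion–Silberstein Singleton-like bound for Ferrers diagram rank-metric codes.
An `m×n` Ferrers diagram is described by its column dot-counts `γ 0 ≤ γ 1 ≤ ... ≤ γ (n-1) = m`
with every column nonempty (the dots of column `j` occupy the top `γ j` rows, and rows are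
right-justified). Let `C` be an `(F, M, d)_q` FDRMC: a set of matrices in `F_q^{m×n}`
supported on the dots of the diagram with pairwise rank distance at least `d`.
For `0 ≤ i ≤ d-1` let `v_i` be the number of dots remaining after deleting the top `i`
rows and the rightmost `d-1-i` columns. Then `|C| ≤ q^{min_i v_i}`. -/
theorem ferrers_singleton_bound {F : Type*} [Field F] [Fintype F] {q m n d : ℕ}
    (hq : Fintype.card F = q) (hn : 0 < n) (hd : 0 < d)
    (γ : ℕ → ℕ) (hmono : Monotone γ)
    (hpos : ∀ j < n, 1 ≤ γ j) (hle : ∀ j < n, γ j ≤ m) (hlast : γ (n - 1) = m)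
    (C : Finset (Matrix (Fin m) (Fin n) F))
    (hsupp : ∀ A ∈ C, ∀ (i : Fin m) (j : Fin n), ¬ ((i : ℕ) < γ (j : ℕ)) → A i j = 0)
    (hdist : ∀ A ∈ C, ∀ B ∈ C, A ≠ B → d ≤ (A - B).rank) :
    C.card ≤ q ^ ((Finset.range d).inf' (Finset.nonempty_range_iff.mpr hd.ne') fun i =>
      ∑ j ∈ Finset.range (n - (d - 1 - i)), (γ j - i)) := by
  classical
  obtain ⟨i, hi_mem, hinf⟩ := Finset.exists_mem_eq_inf' (Finset.nonempty_range_iff.mpr hd.ne')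
    (fun i => ∑ j ∈ Finset.range (n - (d - 1 - i)), (γ j - i))
  rw [hinf]
  rw [Finset.mem_range] at hi_mem
  set k := d - 1 - i with hk
  -- the surviving dot set
  set S : Finset (Fin m × Fin n) := Finset.univ.filter
    (fun p => i ≤ (p.1 : ℕ) ∧ (p.1 : ℕ) < γ (p.2 : ℕ) ∧ (p.2 : ℕ) < n - k) with hS
  -- injectivity of the projection onto S
  have hinj : ∀ A ∈ C, ∀ B ∈ C,
      (∀ p ∈ S, A p.1 p.2 = B p.1 p.2) → A = B := by
    intro A hA B hB hAB
    by_contra hne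
    set D := A - B with hD
    have hDsupp : ∀ (r : Fin m) (c : Fin n), ¬ ((r : ℕ) < γ (c : ℕ)) → D r c = 0 := by
      intro r c hrc
      simp [hD, Matrix.sub_apply, hsupp A hA r c hrc, hsupp B hB r c hrc]
    have hDS : ∀ p ∈ S, D p.1 p.2 = 0 := by
      intro p hp
      simp [hD, Matrix.sub_apply, hAB p hp]
    set R : Matrix (Fin m) (Fin n) F := fun r c => if (r : ℕ) < i then D r c else 0 with hR
    set Cm : Matrix (Fin m) (Fin n) F := fun r c => if (r : ℕ) < i then 0 else D r c with hCm
    have hsplit : D = R + Cm := by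
      funext r c
      simp only [Matrix.add_apply, hR, hCm]
      show D r c = (if (r : ℕ) < i then D r c else 0) + (if (r : ℕ) < i then 0 else D r c)
      split <;> simp
    -- rank R ≤ i
    have hrankR : R.rank ≤ i := by
      rw [← Matrix.rank_transpose]
      have := rank_le_card_cols R.transpose
        (Finset.univ.filter fun r : Fin m => (r : ℕ) < i)
        (by
          intro r hr c
          simp only [Finset.mem_filter, Finset.mem_univ, true_and] at hr
          show (if (r : ℕ) < i then D r c else 0) = 0; simp [hr])
      refine this.trans ?_
      have hcard : (Finset.univ.filter fun r : Fin m => (r : ℕ) < i).card ≤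
          (Finset.range i).card := by
        refine Finset.card_le_card_of_injOn (fun r : Fin m => (r : ℕ)) ?_ ?_
        · intro r hr
          simp only [Finset.mem_coe, Finset.coe_filter, Finset.mem_filter, Finset.mem_univ, true_and, Set.mem_setOf_eq] at hr
          simpa [Finset.mem_range] using hr
        · intro a _ b _ h
          exact Fin.val_injective h
      simpa [Finset.card_range] using hcard
    -- rank Cm ≤ k
    have hrankC : Cm.rank ≤ k := by
      have hzero : ∀ c : Fin n, c ∉ (Finset.univ.filter fun c : Fin n => n - k ≤ (c : ℕ)) →
          ∀ r, Cm r c = 0 := by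
        intro c hc r
        simp only [Finset.mem_filter, Finset.mem_univ, true_and, not_le] at hc
        simp only [hCm]
        split
        · rfl
        · rename_i hri
          push_neg at hri
          by_cases hrγ : (r : ℕ) < γ (c : ℕ)
          · exact hDS (r, c) (by simp [hS, hri, hrγ, hc])
          · exact hDsupp r c hrγ
      refine (rank_le_card_cols Cm _ hzero).trans ?_
      have hcard : (Finset.univ.filter fun c : Fin n => n - k ≤ (c : ℕ)).card ≤
          (Finset.range k).card := by
        refine Finset.card_le_card_of_injOn (fun c : Fin n => (c : ℕ) - (n - k)) ?_ ?_
        · intro c hc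
          simp only [Finset.mem_coe, Finset.coe_filter, Finset.mem_filter, Finset.mem_univ, true_and, Set.mem_setOf_eq] at hc
          have := c.isLt
          simp only [Finset.mem_coe, Finset.mem_range]
          omega
        · intro a ha b hb h
          simp only [Finset.coe_filter, Set.mem_setOf_eq, Finset.mem_univ, true_and] at ha hb
          have h1 := a.isLt; have h2 := b.isLt
          apply Fin.val_injective
          simp only at h
          omega
      simpa [Finset.card_range] using hcard
    have hdle : d ≤ (A - B).rank := hdist A hA B hB hne
    rw [← hD, hsplit] at hdle
    have := (matrix_rank_add_le R Cm)
    omega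
  -- now count
  have hcount : S.card = ∑ j ∈ Finset.range (n - k), (γ j - i) := by
    have h1 : S.card = ∑ c : Fin n, (S.filter fun p => p.2 = c).card :=
      Finset.card_eq_sum_card_fiberwise (fun p _ => Finset.mem_univ p.2)
    have h2 : ∀ c : Fin n, (S.filter fun p => p.2 = c).card =
        (Finset.univ.filter fun r : Fin m =>
          i ≤ (r : ℕ) ∧ (r : ℕ) < γ (c : ℕ) ∧ (c : ℕ) < n - k).card := by
      intro c
      apply Finset.card_nbij' (fun p => p.1) (fun r => (r, c))
      · intro p hp
        simp only [hS, Finset.mem_coe, Finset.mem_filter, Finset.mem_univ, true_and] at hp ⊢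
        obtain ⟨⟨ha, hb, hcc⟩, hpc⟩ := hp
        subst hpc
        exact ⟨ha, hb, hcc⟩
      · intro r hr
        simp only [hS, Finset.mem_coe, Finset.mem_filter, Finset.mem_univ, true_and] at hr ⊢
        exact ⟨hr, trivial⟩
      · intro p hp
        simp only [hS, Finset.mem_coe, Finset.mem_filter, Finset.mem_univ, true_and] at hp
        have : p = (p.1, p.2) := rfl
        rw [this, hp.2]
      · intro r _
        rfl
    have h3 : ∀ c : Fin n, (Finset.univ.filter fun r : Fin m =>
        i ≤ (r : ℕ) ∧ (r : ℕ) < γ (c : ℕ) ∧ (c : ℕ) < n - k).card =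
        if (c : ℕ) < n - k then γ (c : ℕ) - i else 0 := by
      intro c
      have hcard : (Finset.univ.filter fun r : Fin m =>
          i ≤ (r : ℕ) ∧ (r : ℕ) < γ (c : ℕ) ∧ (c : ℕ) < n - k).card =
          ((Finset.range m).filter fun x =>
            i ≤ x ∧ x < γ (c : ℕ) ∧ (c : ℕ) < n - k).card := by
        rw [Finset.card_filter, Finset.card_filter, ← Fin.sum_univ_eq_sum_range]
      rw [hcard]
      by_cases hc : (c : ℕ) < n - k
      · have hγ : γ (c : ℕ) ≤ m := hle _ c.isLt
        have : ((Finset.range m).filter fun x =>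
            i ≤ x ∧ x < γ (c : ℕ) ∧ (c : ℕ) < n - k) = Finset.Ico i (γ (c : ℕ)) := by
          ext x
          simp only [Finset.mem_filter, Finset.mem_range, Finset.mem_Ico]
          omega
        rw [this, if_pos hc, Nat.card_Ico]
      · rw [if_neg hc]
        convert Finset.card_empty
        ext x
        simp only [Finset.mem_filter, Finset.mem_range, Finset.notMem_empty, iff_false]
        tauto
    rw [h1]
    simp_rw [h2, h3]
    rw [Fin.sum_univ_eq_sum_range (fun x => if x < n - k then γ x - i else 0) n]
    rw [← Finset.sum_filter]
    congr 1
    ext x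
    simp only [Finset.mem_filter, Finset.mem_range]
    omega
  -- conclude via an injection into S → F
  have hinj2 : Function.Injective
      (fun (A : {A // A ∈ C}) => (fun p : {p // p ∈ S} => (A : Matrix (Fin m) (Fin n) F) p.1.1 p.1.2)) := by
    rintro ⟨A, hA⟩ ⟨B, hB⟩ hAB
    simp only [Subtype.mk.injEq]
    apply hinj A hA B hB
    intro p hp
    exact congrFun hAB ⟨p, hp⟩
  calc C.card = Fintype.card {A // A ∈ C} := (Fintype.card_coe C).symm
    _ ≤ Fintype.card ({p // p ∈ S} → F) := Fintype.card_le_of_injective _ hinj2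
    _ = q ^ S.card := by rw [Fintype.card_fun, hq, Fintype.card_coe]
    _ = q ^ ∑ j ∈ Finset.range (n - k), (γ j - i) := by rw [hcount]
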